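/- For system (1.4), the rotation determinant with respect to β satisfies the identity P·∂Q/∂β - Q·∂P/∂β = x²y(y(δ+μy) - x(1-λx)) for all x, y. -/
import Mathlib

private lemma deriv_affine (c d : ℝ) : deriv (fun b : ℝ => c * b + d) = fun _ => c := by
  ext b
  have h : HasDerivAt (fun b : ℝ => c * b + d) c b := by
    simpa using ((hasDerivAt_id b).const_mul c).add_const d
  exact h.deriv

/-- The rotation determinant of system (1.4) with respect to β:
P·∂Q/∂β - Q·∂P/∂β = x²y(y(δ+μy) - x(1-λx)). -/
theorem rotation_determinant_beta (α δ lam μ : ℝ) (β : ℝ)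
    (P : ℝ → ℝ → ℝ → ℝ) (Q : ℝ → ℝ → ℝ → ℝ)
    (hP : ∀ b x y, P b x y = x * ((1 - lam * x) * (α * x ^ 2 + b * x + 1) - y))
    (hQ : ∀ b x y, Q b x y = -y * ((δ + μ * y) * (α * x ^ 2 + b * x + 1) - x)) :
    ∀ x y : ℝ,
      P β x y * deriv (fun b => Q b x y) β - Q β x y * deriv (fun b => P b x y) β =
        x ^ 2 * y * (y * (δ + μ * y) - x * (1 - lam * x)) := by
  intro x y
  have hPf : (fun b => P b x y) = fun b =>
      (x * ((1 - lam * x) * x)) * b + x * ((1 - lam * x) * (α * x ^ 2 + 1) - y) := by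
    funext b; rw [hP]; ring
  have hQf : (fun b => Q b x y) = fun b =>
      (-y * ((δ + μ * y) * x)) * b + (-y * ((δ + μ * y) * (α * x ^ 2 + 1) - x)) := by
    funext b; rw [hQ]; ring
  rw [hPf, hQf, deriv_affine, deriv_affine, hP, hQ]
  ring
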